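/- Let n, k ≥ 1, let a, b : {1,…,n} → ℤ² be sequences of points such that the multiset T has at most k distinct points, let σ be an optimal matching, and let (L,v) be a grid with cell size L ≥ 1 and shift v ∈ {0,…,L−1}². Then 2·#{i : ‖a(i) − b(σ(i))‖₁ ≥ 2kL} ≤ k·D_{L,v}(a,b). -/

import Mathlib

/-- ℓ1 norm on ℤ². -/
def l1 (p : ℤ × ℤ) : ℤ := |p.1| + |p.2|

/-- Earth-mover distance between the multisets {a 1,…,a n} and {b 1,…,b n}:
the minimum over permutations σ of ∑ i, ‖a i − b (σ i)‖₁. -/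
noncomputable def EMD {n : ℕ} (a b : Fin n → ℤ × ℤ) : ℤ :=
  Finset.univ.inf' Finset.univ_nonempty
    (fun σ : Equiv.Perm (Fin n) => ∑ i, l1 (a i - b (σ i)))

/-- The grid cell of a point p for the grid of cell size L shifted by v
(floor division; `/` on ℤ with positive divisor is floor division). -/
def cell (L : ℕ) (v p : ℤ × ℤ) : ℤ × ℤ :=
  ((p.1 - v.1) / (L : ℤ), (p.2 - v.2) / (L : ℤ))

/-- The grid ℓ1-difference D_{L,v}(a,b) = Σ_{c∈ℤ²} |#{i : cell(a i) = c} − #{i : cell(b i) = c}|,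
where the (finite) sum is taken over the cells actually occupied (all other terms vanish). -/
def D {n : ℕ} (L : ℕ) (v : ℤ × ℤ) (a b : Fin n → ℤ × ℤ) : ℤ :=
  ∑ c ∈ ((Finset.univ.image fun i => cell L v (a i)) ∪
         (Finset.univ.image fun i => cell L v (b i))),
    |((Finset.univ.filter fun i => cell L v (a i) = c).card : ℤ) -
      ((Finset.univ.filter fun i => cell L v (b i) = c).card : ℤ)|

open Finset

lemma l1_nonneg (p : ℤ × ℤ) : 0 ≤ l1 p := add_nonneg (abs_nonneg _) (abs_nonneg _)

lemma ediv_close {L x y : ℤ} (hL : 0 < L) (h : x / L = y / L) : |x - y| ≤ L - 1 := by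
  have hx1 : 0 ≤ x % L := Int.emod_nonneg x (by omega)
  have hx2 : x % L < L := Int.emod_lt_of_pos x hL
  have hy1 : 0 ≤ y % L := Int.emod_nonneg y (by omega)
  have hy2 : y % L < L := Int.emod_lt_of_pos y hL
  have hx : L * (x / L) + x % L = x := Int.mul_ediv_add_emod x L
  have hy : L * (y / L) + y % L = y := Int.mul_ediv_add_emod y L
  rw [h] at hx
  rw [abs_le]
  constructor <;> linarith

lemma cell_close {L : ℕ} {v p q : ℤ × ℤ} (hL : 1 ≤ L) (h : cell L v p = cell L v q) :
    l1 (p - q) ≤ 2 * ((L : ℤ) - 1) := by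
  have hL' : (0:ℤ) < (L:ℤ) := by exact_mod_cast hL
  have h1 : (p.1 - v.1) / (L:ℤ) = (q.1 - v.1) / (L:ℤ) := congrArg Prod.fst h
  have h2 : (p.2 - v.2) / (L:ℤ) = (q.2 - v.2) / (L:ℤ) := congrArg Prod.snd h
  have e1 := ediv_close hL' h1
  have e2 := ediv_close hL' h2
  have r1 : (p - q).1 = (p.1 - v.1) - (q.1 - v.1) := by simp [Prod.fst_sub]
  have r2 : (p - q).2 = (p.2 - v.2) - (q.2 - v.2) := by simp [Prod.snd_sub]
  simp only [l1, r1, r2]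
  linarith

lemma D_nonneg {n : ℕ} (L : ℕ) (v : ℤ × ℤ) (a b : Fin n → ℤ × ℤ) : 0 ≤ D L v a b :=
  Finset.sum_nonneg fun _ _ => abs_nonneg _

lemma card_filter_perm {n : ℕ} (σ : Equiv.Perm (Fin n)) (p : Fin n → Prop) [DecidablePred p] :
    (Finset.univ.filter fun i => p (σ i)).card = (Finset.univ.filter p).card := by
  apply Finset.card_bij (fun i _ => σ i)
  · intro i hi; simp only [Finset.mem_filter, Finset.mem_univ, true_and] at hi ⊢; exact hi
  · intro i _ j _ hij; exact σ.injective hij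
  · intro j hj
    refine ⟨σ.symm j, ?_, by simp⟩
    simp only [Finset.mem_filter, Finset.mem_univ, true_and] at hj ⊢
    simpa using hj

lemma counting {n : ℕ} (L : ℕ) (v : ℤ × ℤ) (a b : Fin n → ℤ × ℤ) (σ : Equiv.Perm (Fin n))
    (R : Finset (ℤ × ℤ)) (F : Finset (Fin n))
    (hF : ∀ i ∈ F, cell L v (b (σ i)) ∈ R ∧ cell L v (a i) ∉ R)
    (h2 : D L v a b < 2 * (F.card : ℤ)) :
    ∃ i'', cell L v (a i'') ∈ R ∧ cell L v (b (σ i'')) ∉ R := by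
  classical
  set U := ((Finset.univ.image fun i => cell L v (a i)) ∪
      (Finset.univ.image fun i => cell L v (b i))) with hU
  set V := U.filter (fun c => c ∈ R) with hV
  set A : (ℤ × ℤ) → ℕ := fun c => (Finset.univ.filter fun i => cell L v (a i) = c).card with hA
  set B : (ℤ × ℤ) → ℕ := fun c => (Finset.univ.filter fun i => cell L v (b i) = c).card with hB
  set Bs : (ℤ × ℤ) → ℕ := fun c => (Finset.univ.filter fun i : Fin n => cell L v (b (σ i)) = c).card
    with hBs
  have hBB : ∀ c, Bs c = B c := by
    intro c
    simp only [hBs, hB]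
    exact card_filter_perm σ (fun j => cell L v (b j) = c)
  have hmemA : ∀ i : Fin n, cell L v (a i) ∈ U := by
    intro i; rw [hU]; exact mem_union_left _ (mem_image_of_mem _ (mem_univ i))
  have hmemB : ∀ i : Fin n, cell L v (b (σ i)) ∈ U := by
    intro i; rw [hU]; exact mem_union_right _ (mem_image_of_mem _ (mem_univ (σ i)))
  have hmemB' : ∀ i : Fin n, cell L v (b i) ∈ U := by
    intro i; rw [hU]; exact mem_union_right _ (mem_image_of_mem _ (mem_univ i))
  set P := Finset.univ.filter (fun i : Fin n => cell L v (b (σ i)) ∈ R) with hP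
  set Q := Finset.univ.filter (fun i : Fin n => cell L v (a i) ∈ R) with hQ
  have hPcard : P.card = ∑ c ∈ V, Bs c := by
    rw [Finset.card_eq_sum_card_fiberwise (f := fun i => cell L v (b (σ i))) (t := V)
      (fun i hi => by
        rw [hV, Finset.mem_coe, mem_filter]
        exact ⟨hmemB i, by simpa [hP] using hi⟩)]
    refine Finset.sum_congr rfl fun c hc => ?_
    rw [hV, mem_filter] at hc
    congr 1
    rw [hP, Finset.filter_filter]
    apply Finset.filter_congr
    intro i _
    simp only [and_iff_right_iff_imp]
    intro h; rw [h]; exact hc.2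
  have hQcard : Q.card = ∑ c ∈ V, A c := by
    rw [Finset.card_eq_sum_card_fiberwise (f := fun i => cell L v (a i)) (t := V)
      (fun i hi => by
        rw [hV, Finset.mem_coe, mem_filter]
        exact ⟨hmemA i, by simpa [hQ] using hi⟩)]
    refine Finset.sum_congr rfl fun c hc => ?_
    rw [hV, mem_filter] at hc
    congr 1
    rw [hQ, Finset.filter_filter]
    apply Finset.filter_congr
    intro i _
    simp only [and_iff_right_iff_imp]
    intro h; rw [h]; exact hc.2
  have hAtot : ∑ c ∈ U, (A c : ℤ) = n := by
    have : (Finset.univ : Finset (Fin n)).card = ∑ c ∈ U, A c :=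
      Finset.card_eq_sum_card_fiberwise (fun i _ => hmemA i)
    rw [Finset.card_univ, Fintype.card_fin] at this
    exact_mod_cast this.symm
  have hBtot : ∑ c ∈ U, (B c : ℤ) = n := by
    have : (Finset.univ : Finset (Fin n)).card = ∑ c ∈ U, B c :=
      Finset.card_eq_sum_card_fiberwise (fun i _ => hmemB' i)
    rw [Finset.card_univ, Fintype.card_fin] at this
    exact_mod_cast this.symm
  have htot0 : ∑ c ∈ U, ((B c : ℤ) - A c) = 0 := by
    rw [Finset.sum_sub_distrib, hAtot, hBtot, sub_self]
  have hsplit : ∑ c ∈ V, ((B c : ℤ) - A c) + ∑ c ∈ U.filter (fun c => c ∉ R), ((B c : ℤ) - A c)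
      = ∑ c ∈ U, ((B c : ℤ) - A c) := by
    rw [hV]; exact Finset.sum_filter_add_sum_filter_not U _ _
  have hDsplit : ∑ c ∈ V, |(A c : ℤ) - B c| + ∑ c ∈ U.filter (fun c => c ∉ R), |(A c : ℤ) - B c|
      = D L v a b := by
    rw [hV]; exact Finset.sum_filter_add_sum_filter_not U _ _
  have hb1 : ∑ c ∈ V, ((B c : ℤ) - A c) ≤ ∑ c ∈ V, |(A c : ℤ) - B c| :=
    Finset.sum_le_sum fun c _ => by rw [abs_sub_comm]; exact le_abs_self _
  have hb2 : -(∑ c ∈ U.filter (fun c => c ∉ R), |(A c : ℤ) - B c|)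
      ≤ ∑ c ∈ U.filter (fun c => c ∉ R), ((B c : ℤ) - A c) := by
    rw [← Finset.sum_neg_distrib]
    exact Finset.sum_le_sum fun c _ => by
      rw [abs_sub_comm]; exact neg_abs_le _
  have hkey : 2 * (∑ c ∈ V, ((B c : ℤ) - A c)) ≤ D L v a b := by linarith
  set ent := P.filter (fun i => cell L v (a i) ∉ R) with hent
  set lea := Q.filter (fun i => cell L v (b (σ i)) ∉ R) with hlea
  have hPsplit : (P.filter fun i => cell L v (a i) ∈ R).card + ent.card = P.card := by
    rw [hent]; exact Finset.card_filter_add_card_filter_not _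
  have hQsplit : (Q.filter fun i => cell L v (b (σ i)) ∈ R).card + lea.card = Q.card := by
    rw [hlea]; exact Finset.card_filter_add_card_filter_not _
  have hPQ : (P.filter fun i => cell L v (a i) ∈ R) = (Q.filter fun i => cell L v (b (σ i)) ∈ R) := by
    rw [hP, hQ, Finset.filter_filter, Finset.filter_filter]
    apply Finset.filter_congr
    intro i _
    exact and_comm
  have hFent : F ⊆ ent := by
    intro i hi
    rw [hent, Finset.mem_filter, hP, Finset.mem_filter]
    exact ⟨⟨mem_univ i, (hF i hi).1⟩, (hF i hi).2⟩
  have hentF : (F.card : ℤ) ≤ ent.card := by exact_mod_cast Finset.card_le_card hFent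
  have hPQd : (P.card : ℤ) - Q.card = ∑ c ∈ V, ((B c : ℤ) - A c) := by
    rw [Finset.sum_sub_distrib]
    have : ∑ c ∈ V, (B c : ℤ) = ∑ c ∈ V, (Bs c : ℤ) := by
      exact Finset.sum_congr rfl fun c _ => by rw [hBB]
    rw [this]
    rw [hPcard, hQcard]
    push_cast
    ring
  have hlea_pos : 0 < lea.card := by
    by_contra hcontra
    have h0 : lea.card = 0 := by omega
    rw [hPQ] at hPsplit
    have h1 : ent.card + Q.card = P.card + lea.card := by omega
    have h2' : (ent.card : ℤ) + Q.card = (P.card : ℤ) + lea.card := by exact_mod_cast h1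
    rw [h0] at h2'
    push_cast at h2'
    linarith [hkey, hPQd, hentF, h2]
  obtain ⟨i'', hi''⟩ := Finset.card_pos.mp hlea_pos
  rw [hlea, Finset.mem_filter, hQ, Finset.mem_filter] at hi''
  exact ⟨i'', hi''.1.2, hi''.2⟩

/-- rotation permutation: `rot i [x₀,…,x_{q-1}]` sends `i ↦ x₀ ↦ x₁ ↦ … ↦ x_{q-1} ↦ i`
(when `i :: l` has no duplicates). -/
def rot {n : ℕ} (i : Fin n) : List (Fin n) → Equiv.Perm (Fin n)
  | [] => 1
  | x :: l => rot i l * Equiv.swap i x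

lemma rot_not_mem {n : ℕ} (i : Fin n) (l : List (Fin n)) (j : Fin n)
    (hji : j ≠ i) (hjl : j ∉ l) : rot i l j = j := by
  induction l with
  | nil => rfl
  | cons x l ih =>
    have hjx : j ≠ x := fun h => hjl (h ▸ List.mem_cons_self (a := x) (l := l))
    have hjl' : j ∉ l := fun h => hjl (List.mem_cons_of_mem x h)
    show (rot i l) (Equiv.swap i x j) = j
    rw [Equiv.swap_apply_of_ne_of_ne hji hjx]
    exact ih hjl'

lemma rot_i {n : ℕ} (i : Fin n) (x : Fin n) (l : List (Fin n))
    (hx : x ≠ i) (hxl : x ∉ l) : rot i (x :: l) i = x := by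
  show (rot i l) (Equiv.swap i x i) = x
  rw [Equiv.swap_apply_left]
  exact rot_not_mem i l x hx hxl

lemma rot_getElem {n : ℕ} (i : Fin n) (l : List (Fin n)) (hnd : (i :: l).Nodup)
    (s : ℕ) (hs : s < l.length) :
    rot i l (l[s]) = if h : s + 1 < l.length then l[s+1] else i := by
  induction l generalizing s with
  | nil => simp at hs
  | cons x l ih =>
    have hinx : i ∉ x :: l := (List.nodup_cons.mp hnd).1
    have hnd' : (x :: l).Nodup := (List.nodup_cons.mp hnd).2
    have hxi : x ≠ i := fun h => hinx (h ▸ List.mem_cons_self (a := x) (l := l))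
    have hxl : x ∉ l := (List.nodup_cons.mp hnd').1
    have hil : i ∉ l := fun h => hinx (List.mem_cons_of_mem x h)
    have hndt : (i :: l).Nodup := List.nodup_cons.mpr ⟨hil, (List.nodup_cons.mp hnd').2⟩
    rcases s with _ | s'
    · rw [List.getElem_cons_zero]
      have h0 : rot i (x :: l) x = rot i l i := by
        show (rot i l) (Equiv.swap i x x) = rot i l i
        rw [Equiv.swap_apply_right]
      rw [h0]
      cases l with
      | nil => simp [rot]
      | cons z l' =>
        have hz : z ≠ i := by
          intro h; exact hil (h ▸ List.mem_cons_self (a := z) (l := l'))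
        have hzl' : z ∉ l' := (List.nodup_cons.mp (List.nodup_cons.mp hnd').2).1
        rw [rot_i i z l' hz hzl']
        rw [dif_pos (by simp)]
        rfl
    · have hs'' : s' < l.length := by simpa using hs
      rw [List.getElem_cons_succ]
      have hmem : l[s']'hs'' ∈ l := List.getElem_mem _
      have h1 : l[s']'hs'' ≠ i := fun h => hil (h ▸ hmem)
      have h2 : l[s']'hs'' ≠ x := fun h => hxl (h ▸ hmem)
      have h3 : rot i (x :: l) (l[s']'hs'') = rot i l (l[s']'hs'') := by
        show (rot i l) (Equiv.swap i x (l[s']'hs'')) = rot i l (l[s']'hs'')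
        rw [Equiv.swap_apply_of_ne_of_ne h1 h2]
      rw [h3, ih hndt s' hs'']
      by_cases h : s' + 1 < l.length
      · rw [dif_pos h, dif_pos (by simp; omega)]
        rfl
      · rw [dif_neg h, dif_neg (by simp; omega)]

lemma swap_contra {n k L : ℕ} (hk : 1 ≤ k) (hL : 1 ≤ L) (v : ℤ × ℤ)
    (a b : Fin n → ℤ × ℤ) (σ : Equiv.Perm (Fin n))
    (hopt : ∀ τ : Equiv.Perm (Fin n),
      ∑ i, l1 (a i - b (σ i)) ≤ ∑ i, l1 (a i - b (τ i)))
    (i : Fin n) (m : List (Fin n)) (hm : m ≠ [])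
    (hnd : (i :: m.reverse).Nodup)
    (hlen : m.length + 1 ≤ k)
    (hfar : 2 * (k : ℤ) * L ≤ l1 (a i - b (σ i)))
    (hhead : cell L v (a (m.head hm)) = cell L v (b (σ i)))
    (hchain : m.Chain' fun x y => cell L v (a y) = cell L v (b (σ x)))
    (hlast : cell L v (a i) = cell L v (b (σ (m.getLast hm)))) : False := by
  classical
  have hrm : m.reverse ≠ [] := by simpa using hm
  have hq : 1 ≤ m.length := List.length_pos_iff.mpr hm
  have hrchain : m.reverse.Chain' (fun x y => cell L v (a x) = cell L v (b (σ y))) :=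
    List.isChain_reverse.mpr (by
      have : (flip fun x y => cell L v (a x) = cell L v (b (σ y)))
          = fun x y => cell L v (a y) = cell L v (b (σ x)) := rfl
      show List.IsChain (fun x y => cell L v (a y) = cell L v (b (σ x))) m
      exact hchain)
  have hbound : ∀ j ∈ (i :: m.reverse),
      l1 (a j - b (σ (rot i m.reverse j))) ≤ 2 * ((L : ℤ) - 1) := by
    intro j hj
    rcases List.mem_cons.mp hj with rfl | hj'
    · cases hrev : m.reverse with
      | nil => exact absurd hrev hrm
      | cons x l =>
        have hx : x ≠ j := by
          have := hnd
          rw [hrev, List.nodup_cons] at this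
          exact fun h => this.1 (h ▸ List.mem_cons_self (a := x) (l := l))
        have hxl : x ∉ l := by
          have := hnd
          rw [hrev, List.nodup_cons, List.nodup_cons] at this
          exact this.2.1
        rw [rot_i j x l hx hxl]
        have hm2 : m = (x :: l).reverse := by rw [← hrev, List.reverse_reverse]
        subst hm2
        have hxlast : x = ((x :: l).reverse).getLast (by simp) := by
          rw [List.getLast_reverse]
          rfl
        rw [← hxlast] at hlast
        exact cell_close hL hlast
    · obtain ⟨s, hs, rfl⟩ := List.mem_iff_getElem.mp hj'
      rw [rot_getElem i m.reverse hnd s hs]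
      by_cases h : s + 1 < m.reverse.length
      · rw [dif_pos h]
        have hc := List.isChain_iff_getElem.mp hrchain s (by omega)
        exact cell_close hL hc
      · rw [dif_neg h]
        have e1 : m.reverse[s] = m.reverse.getLast hrm := by
          rw [List.getLast_eq_getElem]
          congr 1
          simp only [List.length_reverse] at hs h ⊢
          omega
        have e2 : m.reverse.getLast hrm = m.head hm := by
          rw [List.getLast_reverse]
        rw [e1, e2]
        exact cell_close hL hhead
  have hsum := hopt ((rot i m.reverse).trans σ)
  simp only [Equiv.trans_apply] at hsum
  have hsplit : ∀ f : Fin n → ℤ,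
      ∑ j, f j = ∑ j ∈ (i :: m.reverse).toFinset, f j
        + ∑ j ∈ Finset.univ \ (i :: m.reverse).toFinset, f j := by
    intro f
    rw [add_comm, Finset.sum_sdiff (Finset.subset_univ _)]
  rw [hsplit (fun j => l1 (a j - b (σ j))),
      hsplit (fun j => l1 (a j - b (σ (rot i m.reverse j))))] at hsum
  have hoff : ∑ j ∈ Finset.univ \ (i :: m.reverse).toFinset,
        l1 (a j - b (σ (rot i m.reverse j)))
      = ∑ j ∈ Finset.univ \ (i :: m.reverse).toFinset, l1 (a j - b (σ j)) := by
    refine Finset.sum_congr rfl fun j hj => ?_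
    rw [Finset.mem_sdiff] at hj
    have hjn : j ∉ (i :: m.reverse) := fun h => hj.2 (List.mem_toFinset.mpr h)
    have hji : j ≠ i := fun h => hjn (h ▸ List.mem_cons_self (a := i) (l := m.reverse))
    have hjl : j ∉ m.reverse := fun h => hjn (List.mem_cons_of_mem i h)
    rw [rot_not_mem i m.reverse j hji hjl]
  rw [hoff] at hsum
  have hAB : ∑ j ∈ (i :: m.reverse).toFinset, l1 (a j - b (σ j))
      ≤ ∑ j ∈ (i :: m.reverse).toFinset, l1 (a j - b (σ (rot i m.reverse j))) := by
    linarith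
  have hlow : l1 (a i - b (σ i)) ≤ ∑ j ∈ (i :: m.reverse).toFinset, l1 (a j - b (σ j)) :=
    Finset.single_le_sum (fun j _ => l1_nonneg _) (by simp)
  have hup : ∑ j ∈ (i :: m.reverse).toFinset, l1 (a j - b (σ (rot i m.reverse j)))
      ≤ ((i :: m.reverse).toFinset.card) • (2 * ((L:ℤ) - 1)) :=
    Finset.sum_le_card_nsmul _ _ _ (fun j hj => hbound j (List.mem_toFinset.mp hj))
  have hTcard : (i :: m.reverse).toFinset.card = m.length + 1 := by
    rw [List.toFinset_card_of_nodup hnd]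
    simp
  rw [hTcard, nsmul_eq_mul] at hup
  have hle : ((m.length + 1 : ℕ) : ℤ) ≤ (k : ℤ) := by exact_mod_cast hlen
  have hLpos : (1:ℤ) ≤ (L:ℤ) := by exact_mod_cast hL
  have hkpos : (1:ℤ) ≤ (k:ℤ) := by exact_mod_cast hk
  have hmul : ((m.length + 1 : ℕ) : ℤ) * (2 * ((L:ℤ) - 1)) ≤ (k:ℤ) * (2 * ((L:ℤ) - 1)) :=
    mul_le_mul_of_nonneg_right hle (by linarith)
  nlinarith [hfar, hlow, hAB, hup, hmul]

/-- There is a chain of σ-edges from the cell c₀ to the cell d staying inside the region R. -/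
def chainTo {n : ℕ} (L : ℕ) (v : ℤ × ℤ) (a b : Fin n → ℤ × ℤ) (σ : Equiv.Perm (Fin n))
    (R : Finset (ℤ × ℤ)) (c₀ d : ℤ × ℤ) : Prop :=
  ∃ (x : Fin n) (l : List (Fin n)),
    (x :: l).Nodup ∧
    (x :: l).length + 1 ≤ R.card ∧
    cell L v (a x) = c₀ ∧
    List.Chain' (fun p q => cell L v (a q) = cell L v (b (σ p))) (x :: l) ∧
    cell L v (b (σ ((x :: l).getLast (List.cons_ne_nil x l)))) = d ∧
    (∀ y ∈ x :: l, cell L v (a y) ∈ R) ∧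
    (∀ y ∈ x :: l, cell L v (b (σ y)) ∈ R)

lemma chainTo_mono {n : ℕ} {L : ℕ} {v : ℤ × ℤ} {a b : Fin n → ℤ × ℤ} {σ : Equiv.Perm (Fin n)}
    {R R' : Finset (ℤ × ℤ)} {c₀ d : ℤ × ℤ} (hsub : R ⊆ R')
    (h : chainTo L v a b σ R c₀ d) : chainTo L v a b σ R' c₀ d := by
  obtain ⟨x, l, h1, h2, h3, h4, h5, h6, h7⟩ := h
  exact ⟨x, l, h1, le_trans h2 (Finset.card_le_card hsub), h3, h4, h5,
    fun y hy => hsub (h6 y hy), fun y hy => hsub (h7 y hy)⟩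

lemma chain_extend {n : ℕ} {L : ℕ} {v : ℤ × ℤ} {a b : Fin n → ℤ × ℤ} {σ : Equiv.Perm (Fin n)}
    {R : Finset (ℤ × ℤ)} {c₀ : ℤ × ℤ} (hc₀R : c₀ ∈ R)
    (i'' : Fin n) (hA : cell L v (a i'') ∈ R) (hB : cell L v (b (σ i'')) ∉ R)
    (hor : cell L v (a i'') = c₀ ∨ chainTo L v a b σ R c₀ (cell L v (a i''))) :
    ∃ (x : Fin n) (l : List (Fin n)),
      (x :: l).Nodup ∧
      (x :: l).length + 1 ≤ R.card + 1 ∧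
      cell L v (a x) = c₀ ∧
      List.Chain' (fun p q => cell L v (a q) = cell L v (b (σ p))) (x :: l) ∧
      (x :: l).getLast (List.cons_ne_nil x l) = i'' ∧
      (∀ y ∈ x :: l, cell L v (a y) ∈ R) ∧
      (∀ y ∈ x :: l, cell L v (b (σ y)) ∈ R ∨ y = i'') := by
  rcases hor with h | h
  · refine ⟨i'', [], by simp, ?_, h, List.isChain_singleton _, by simp, ?_, ?_⟩
    · have : 0 < R.card := Finset.card_pos.mpr ⟨c₀, hc₀R⟩
      simp only [List.length_cons, List.length_nil]
      omega
    · intro y hy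
      rw [List.mem_singleton] at hy
      subst hy
      exact hA
    · intro y hy
      rw [List.mem_singleton] at hy
      exact Or.inr hy
  · obtain ⟨x, l, h1, h2, h3, h4, h5, h6, h7⟩ := h
    have hnotmem : i'' ∉ x :: l := fun hmem => hB (h7 i'' hmem)
    refine ⟨x, l ++ [i''], ?_, ?_, h3, ?_, ?_, ?_, ?_⟩
    · have : ((x :: l) ++ [i'']).Nodup := by
        rw [List.nodup_append]
        exact ⟨h1, List.nodup_singleton _, by
          intro y hy z hy' hyz
          rw [List.mem_singleton] at hy'
          subst hy'
          subst hyz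
          exact hnotmem hy⟩
      simpa using this
    · have : ((x :: l) ++ [i'']).length = (x :: l).length + 1 := by simp
      simp only [List.cons_append] at this
      simp only [this]
      omega
    · have hch : List.Chain' (fun p q => cell L v (a q) = cell L v (b (σ p))) ((x :: l) ++ [i'']) := by
        apply List.IsChain.append h4 (List.isChain_singleton _)
        intro p hp q hq
        rw [List.getLast?_eq_getLast (List.cons_ne_nil x l)] at hp
        simp only [Option.mem_def, Option.some.injEq] at hp
        rw [List.head?_cons, Option.mem_def, Option.some.injEq] at hq
        subst hp
        subst hq
        exact h5.symm
      simpa using hch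
    · have : ((x :: l) ++ [i'']).getLast (by simp) = i'' := List.getLast_append _
      simpa using this
    · intro y hy
      rw [← List.cons_append] at hy
      rcases List.mem_append.mp hy with h' | h'
      · exact h6 y h'
      · rw [List.mem_singleton] at h'
        subst h'
        exact hA
    · intro y hy
      rw [← List.cons_append] at hy
      rcases List.mem_append.mp hy with h' | h'
      · exact Or.inl (h7 y h')
      · rw [List.mem_singleton] at h'
        exact Or.inr h'

lemma key {n k L : ℕ} (hk : 1 ≤ k) (hL : 1 ≤ L)
    (a b : Fin n → ℤ × ℤ) (hT : (Finset.univ.image b).card ≤ k)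
    (σ : Equiv.Perm (Fin n))
    (hopt : ∀ τ : Equiv.Perm (Fin n),
      ∑ i, l1 (a i - b (σ i)) ≤ ∑ i, l1 (a i - b (τ i)))
    (v : ℤ × ℤ) (t : ℤ × ℤ) :
    2 * ((Finset.univ.filter fun i =>
        2 * (k : ℤ) * (L : ℤ) ≤ l1 (a i - b (σ i)) ∧ b (σ i) = t).card : ℤ)
      ≤ D L v a b := by
  classical
  by_contra hcon
  push_neg at hcon
  set F := (Finset.univ.filter fun i =>
      2 * (k : ℤ) * (L : ℤ) ≤ l1 (a i - b (σ i)) ∧ b (σ i) = t) with hF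
  set c₀ := cell L v t with hc₀
  have hFmem : ∀ i ∈ F, 2 * (k : ℤ) * (L : ℤ) ≤ l1 (a i - b (σ i)) ∧ b (σ i) = t := by
    intro i hi
    rw [hF, Finset.mem_filter] at hi
    exact hi.2
  have hFc : ∀ i ∈ F, cell L v (b (σ i)) = c₀ := by
    intro i hi
    rw [(hFmem i hi).2]
  have hLZ : (1:ℤ) ≤ (L:ℤ) := by exact_mod_cast hL
  have hkZ : (1:ℤ) ≤ (k:ℤ) := by exact_mod_cast hk
  have hFnotc₀ : ∀ i ∈ F, cell L v (a i) ≠ c₀ := by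
    intro i hi h
    have hc : cell L v (a i) = cell L v (b (σ i)) := by rw [h, hFc i hi]
    have h1 := cell_close hL hc
    have h2 := (hFmem i hi).1
    nlinarith
  have hFpos : 0 < F.card := by
    by_contra h
    have h0 : F.card = 0 := by omega
    rw [h0] at hcon
    have := D_nonneg (n := n) L v a b
    push_cast at hcon
    linarith
  obtain ⟨i₀, hi₀⟩ := Finset.card_pos.mp hFpos
  have hcardle : ∀ R : Finset (ℤ × ℤ), (∀ d ∈ R, ∃ j : Fin n, cell L v (b j) = d) → R.card ≤ k := by
    intro R hval
    have hinj : R.card ≤ (Finset.univ.image b).card := by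
      apply Finset.card_le_card_of_injOn
        (f := fun d => if h : ∃ j : Fin n, cell L v (b j) = d then b h.choose else (0, 0))
      · intro d hd
        simp only [Finset.mem_coe, dif_pos (hval d hd)]
        exact Finset.mem_image_of_mem b (Finset.mem_univ _)
      · intro d1 hd1 d2 hd2 heq
        have hd1' : d1 ∈ R := by simpa using hd1
        have hd2' : d2 ∈ R := by simpa using hd2
        simp only at heq
        rw [dif_pos (hval d1 hd1'), dif_pos (hval d2 hd2')] at heq
        have e1 : cell L v (b (hval d1 hd1').choose) = d1 := (hval d1 hd1').choose_spec
        have e2 : cell L v (b (hval d2 hd2').choose) = d2 := (hval d2 hd2').choose_spec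
        rw [← e1, ← e2, heq]
    exact le_trans hinj hT
  have main : ∀ (jj : ℕ) (R : Finset (ℤ × ℤ)),
      c₀ ∈ R →
      (∀ i ∈ F, cell L v (a i) ∉ R) →
      (∀ d ∈ R, ∃ j0 : Fin n, cell L v (b j0) = d) →
      (∀ d ∈ R, d = c₀ ∨ chainTo L v a b σ R c₀ d) →
      k ≤ R.card + jj → False := by
    intro jj
    induction jj with
    | zero =>
      intro R h1 h2 h3 h4 hjj
      obtain ⟨i'', hA, hB⟩ := counting L v a b σ R F
        (fun i hi => ⟨by rw [hFc i hi]; exact h1, h2 i hi⟩) hcon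
      have hval' : ∀ d ∈ insert (cell L v (b (σ i''))) R, ∃ j0 : Fin n, cell L v (b j0) = d := by
        intro d hd
        rcases Finset.mem_insert.mp hd with rfl | hd'
        · exact ⟨σ i'', rfl⟩
        · exact h3 d hd'
      have := hcardle _ hval'
      rw [Finset.card_insert_of_notMem hB] at this
      omega
    | succ jj ih =>
      intro R h1 h2 h3 h4 hjj
      obtain ⟨i'', hA, hB⟩ := counting L v a b σ R F
        (fun i hi => ⟨by rw [hFc i hi]; exact h1, h2 i hi⟩) hcon
      have hval' : ∀ d ∈ insert (cell L v (b (σ i''))) R, ∃ j0 : Fin n, cell L v (b j0) = d := by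
        intro d hd
        rcases Finset.mem_insert.mp hd with rfl | hd'
        · exact ⟨σ i'', rfl⟩
        · exact h3 d hd'
      have hcard' : R.card + 1 ≤ k := by
        have := hcardle _ hval'
        rw [Finset.card_insert_of_notMem hB] at this
        omega
      obtain ⟨x, l, hnd, hlenl, hhd, hch, hgl, hmA, hmB⟩ :=
        chain_extend h1 i'' hA hB (h4 _ hA)
      by_cases hbreak : ∃ i ∈ F, cell L v (a i) = cell L v (b (σ i''))
      · obtain ⟨i, hiF, hieq⟩ := hbreak
        refine swap_contra hk hL v a b σ hopt i (x :: l) (List.cons_ne_nil x l) ?_ ?_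
          ((hFmem i hiF).1) ?_ hch ?_
        · rw [List.nodup_cons]
          constructor
          · intro hmem
            rw [List.mem_reverse] at hmem
            have := hmA i hmem
            rw [hieq] at this
            exact hB this
          · exact List.nodup_reverse.mpr hnd
        · simp only [List.length_cons]
          simp only [List.length_cons] at hlenl
          omega
        · show cell L v (a x) = cell L v (b (σ i))
          rw [hhd, hFc i hiF]
        · rw [hgl]
          exact hieq
      · push_neg at hbreak
        refine ih (insert (cell L v (b (σ i''))) R) (Finset.mem_insert_of_mem h1) ?_ hval' ?_ ?_
        · intro i hi
          rw [Finset.mem_insert]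
          push_neg
          exact ⟨hbreak i hi, h2 i hi⟩
        · intro d hd
          rcases Finset.mem_insert.mp hd with rfl | hd'
          · refine Or.inr ⟨x, l, hnd, ?_, hhd, hch, ?_, ?_, ?_⟩
            · rw [Finset.card_insert_of_notMem hB]
              exact hlenl
            · rw [hgl]
            · intro y hy
              exact Finset.mem_insert_of_mem (hmA y hy)
            · intro y hy
              rcases hmB y hy with h' | h'
              · exact Finset.mem_insert_of_mem h'
              · subst h'
                exact Finset.mem_insert_self _ _
          · rcases h4 d hd' with h' | h'
            · exact Or.inl h'
            · exact Or.inr (chainTo_mono (Finset.subset_insert _ _) h')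
        · rw [Finset.card_insert_of_notMem hB]
          omega
  refine main k {c₀} (Finset.mem_singleton_self c₀) ?_ ?_ ?_ ?_
  · intro i hi hmem
    rw [Finset.mem_singleton] at hmem
    exact hFnotc₀ i hi hmem
  · intro d hd
    rw [Finset.mem_singleton] at hd
    subst hd
    exact ⟨σ i₀, by rw [(hFmem i₀ hi₀).2]⟩
  · intro d hd
    exact Or.inl (Finset.mem_singleton.mp hd)
  · rw [Finset.card_singleton]
    omega

/-- Claim 2, single level: if T has at most k distinct points and σ is
an optimal matching, then 2·#{i : ‖a i − b (σ i)‖₁ ≥ 2kL} ≤ k·D_{L,v}(a,b). -/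
theorem long_edges_le_grid_diff (n k : ℕ) (hn : 1 ≤ n) (hk : 1 ≤ k)
    (a b : Fin n → ℤ × ℤ) (hT : (Finset.univ.image b).card ≤ k)
    (σ : Equiv.Perm (Fin n))
    (hopt : ∀ τ : Equiv.Perm (Fin n),
      ∑ i, l1 (a i - b (σ i)) ≤ ∑ i, l1 (a i - b (τ i)))
    (L : ℕ) (hL : 1 ≤ L) (v : ℤ × ℤ)
    (hv : 0 ≤ v.1 ∧ v.1 < (L : ℤ) ∧ 0 ≤ v.2 ∧ v.2 < (L : ℤ)) :
    2 * ((Finset.univ.filter fun i =>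
        2 * (k : ℤ) * (L : ℤ) ≤ l1 (a i - b (σ i))).card : ℤ) ≤
      (k : ℤ) * D L v a b := by
  classical
  have hfib : (Finset.univ.filter fun i =>
      2 * (k : ℤ) * (L : ℤ) ≤ l1 (a i - b (σ i))).card
      = ∑ t ∈ Finset.univ.image b,
        ((Finset.univ.filter fun i =>
          2 * (k : ℤ) * (L : ℤ) ≤ l1 (a i - b (σ i)) ∧ b (σ i) = t)).card := by
    rw [Finset.card_eq_sum_card_fiberwise (f := fun i => b (σ i)) (t := Finset.univ.image b)
      (fun i _ => Finset.mem_image_of_mem b (Finset.mem_univ (σ i)))]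
    exact Finset.sum_congr rfl fun t _ => by rw [Finset.filter_filter]
  have hstep : ∀ t ∈ Finset.univ.image b,
      2 * (((Finset.univ.filter fun i =>
        2 * (k : ℤ) * (L : ℤ) ≤ l1 (a i - b (σ i)) ∧ b (σ i) = t)).card : ℤ)
      ≤ D L v a b := fun t _ => key hk hL a b hT σ hopt v t
  calc 2 * ((Finset.univ.filter fun i =>
        2 * (k : ℤ) * (L : ℤ) ≤ l1 (a i - b (σ i))).card : ℤ)
      = ∑ t ∈ Finset.univ.image b,
          2 * (((Finset.univ.filter fun i =>
            2 * (k : ℤ) * (L : ℤ) ≤ l1 (a i - b (σ i)) ∧ b (σ i) = t)).card : ℤ) := by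
        rw [hfib]
        push_cast
        rw [Finset.mul_sum]
    _ ≤ ∑ _t ∈ Finset.univ.image b, D L v a b := Finset.sum_le_sum hstep
    _ = ((Finset.univ.image b).card : ℤ) * D L v a b := by
        rw [Finset.sum_const, nsmul_eq_mul]
    _ ≤ (k : ℤ) * D L v a b := by
        apply mul_le_mul_of_nonneg_right _ (D_nonneg L v a b)
        exact_mod_cast hT
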